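/- arXiv:0808.3453 — 4 statements merged into one kernel-verified Lean document; each statement's English description precedes it below -/
import Mathlib

section
/- For 0 < ω < 1 and t ≥ 1 with t(R-1) < 0, the function x ↦ x(R - 1 + t·h(ω/x)) on [ω,1] attains its maximum at x₀ = ω/(1-z) where z is defined by t log₂ z = R-1, provided x₀ ≤ 1; and at this point the maximum value equals ω t log₂(z/(1-z)). -/
/-- The binary entropy function. -/
noncomputable def binEnt (x : ℝ) : ℝ := -x * Real.logb 2 x - (1 - x) * Real.logb 2 (1 - x)

lemma expand_aux (t R ω z x : ℝ) (hω0 : 0 < ω)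
    (hz : t * Real.logb 2 z = R - 1) (hx1 : ω ≤ x) :
    x * (R - 1 + t * binEnt (ω / x)) =
      t * (x * Real.logb 2 z + x * Real.logb 2 x
        - (x - ω) * Real.logb 2 (x - ω) - ω * Real.logb 2 ω) := by
  rcases eq_or_lt_of_le hx1 with rfl | hωx
  · simp only [binEnt, div_self hω0.ne', Real.logb_one, sub_self, Real.logb_zero]
    rw [← hz]; ring
  · have hxpos : 0 < x := hω0.trans hωx
    have h1 : (1 : ℝ) - ω / x = (x - ω) / x := by field_simp
    rw [binEnt, Real.logb_div hω0.ne' hxpos.ne', h1,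
      Real.logb_div (sub_pos.2 hωx).ne' hxpos.ne', ← hz]
    field_simp
    ring

theorem stmt_3 (t R ω z : ℝ) (ht : 1 ≤ t) (hR : t * (R - 1) < 0)
    (hω0 : 0 < ω) (hω1 : ω < 1)
    (hz0 : 0 < z) (hz : t * Real.logb 2 z = R - 1)
    (hx0 : ω / (1 - z) ≤ 1) :
    IsMaxOn (fun x => x * (R - 1 + t * binEnt (ω / x))) (Set.Icc ω 1) (ω / (1 - z)) ∧
      (ω / (1 - z)) * (R - 1 + t * binEnt (ω / (ω / (1 - z)))) =
        ω * t * Real.logb 2 (z / (1 - z)) := by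
  have ht0 : (0 : ℝ) < t := lt_of_lt_of_le one_pos ht
  have hR1 : R - 1 < 0 := by nlinarith
  have hzlt1 : z < 1 := by
    by_contra h
    push_neg at h
    have : (0 : ℝ) ≤ Real.logb 2 z := Real.logb_nonneg (by norm_num) h
    nlinarith
  have h1z : 0 < 1 - z := sub_pos.2 hzlt1
  have hx₀pos : 0 < ω / (1 - z) := div_pos hω0 h1z
  have hωx₀ : ω ≤ ω / (1 - z) := by
    rw [le_div_iff₀ h1z]; nlinarith
  have hlog2 : 0 < Real.log 2 := Real.log_pos (by norm_num)
  constructor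
  · rw [isMaxOn_iff]
    intro x hx
    obtain ⟨hx1, hx2⟩ := hx
    have hxpos : 0 < x := lt_of_lt_of_le hω0 hx1
    show x * (R - 1 + t * binEnt (ω / x)) ≤ _
    rw [expand_aux t R ω z x hω0 hz hx1,
      expand_aux t R ω z (ω / (1 - z)) hω0 hz hωx₀]
    apply mul_le_mul_of_nonneg_left _ ht0.le
    -- simplify the value at x₀
    have hzx₀ : ω / (1 - z) - ω = z * (ω / (1 - z)) := by
      field_simp; ring
    have hc : ω / (1 - z) - z * (ω / (1 - z)) = ω := by
      field_simp
    rw [hzx₀, Real.logb_mul hz0.ne' hx₀pos.ne']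
    -- key inequality 1
    have key1 : (x - ω) * (Real.logb 2 z + Real.logb 2 x - Real.logb 2 (x - ω))
        ≤ (z * x - (x - ω)) / Real.log 2 := by
      rcases eq_or_lt_of_le hx1 with rfl | hωx
      · simp only [sub_self, zero_mul, sub_zero]
        positivity
      · have hd : 0 < x - ω := sub_pos.2 hωx
        have hs : 0 < z * x / (x - ω) := by positivity
        have hlog := Real.log_le_sub_one_of_pos hs
        have he : Real.logb 2 z + Real.logb 2 x - Real.logb 2 (x - ω)
            = Real.log (z * x / (x - ω)) / Real.log 2 := by
          rw [Real.log_div (by positivity) hd.ne', Real.log_mul hz0.ne' hxpos.ne']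
          simp only [Real.logb]
          ring
        rw [he, mul_div_assoc', div_le_div_iff_of_pos_right hlog2]
        calc (x - ω) * Real.log (z * x / (x - ω))
            ≤ (x - ω) * (z * x / (x - ω) - 1) :=
              mul_le_mul_of_nonneg_left hlog hd.le
          _ = z * x - (x - ω) := by field_simp
    -- key inequality 2
    have key2 : ω * (Real.logb 2 x - Real.logb 2 (ω / (1 - z)))
        ≤ ((1 - z) * x - ω) / Real.log 2 := by
      have hs : 0 < x / (ω / (1 - z)) := div_pos hxpos hx₀pos
      have hlog := Real.log_le_sub_one_of_pos hs
      have he : Real.logb 2 x - Real.logb 2 (ω / (1 - z))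
          = Real.log (x / (ω / (1 - z))) / Real.log 2 := by
        rw [Real.log_div hxpos.ne' hx₀pos.ne']
        simp only [Real.logb]
        ring
      have hω' : ω * (x / (ω / (1 - z)) - 1) = (1 - z) * x - ω := by
        field_simp
      rw [he, mul_div_assoc', div_le_div_iff_of_pos_right hlog2]
      calc ω * Real.log (x / (ω / (1 - z)))
          ≤ ω * (x / (ω / (1 - z)) - 1) := mul_le_mul_of_nonneg_left hlog hω0.le
        _ = (1 - z) * x - ω := hω'
    have hsum : (z * x - (x - ω)) / Real.log 2 + ((1 - z) * x - ω) / Real.log 2 = 0 := by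
      rw [← add_div, show (z * x - (x - ω)) + ((1 - z) * x - ω) = 0 by ring, zero_div]
    have hid : x * Real.logb 2 z + x * Real.logb 2 x - (x - ω) * Real.logb 2 (x - ω)
          - ω * Real.logb 2 ω
        - (ω / (1 - z) * Real.logb 2 z + ω / (1 - z) * Real.logb 2 (ω / (1 - z))
          - z * (ω / (1 - z)) * (Real.logb 2 z + Real.logb 2 (ω / (1 - z)))
          - ω * Real.logb 2 ω)
        = (x - ω) * (Real.logb 2 z + Real.logb 2 x - Real.logb 2 (x - ω))
          + ω * (Real.logb 2 x - Real.logb 2 (ω / (1 - z)))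
          - (ω / (1 - z) - z * (ω / (1 - z)) - ω) * (Real.logb 2 z + Real.logb 2 (ω / (1 - z)))
        := by ring
    have hc0 : ω / (1 - z) - z * (ω / (1 - z)) - ω = 0 := by
      rw [hc]; ring
    rw [hc0] at hid
    linarith [key1, key2, hsum, hid]
  · have hq : ω / (ω / (1 - z)) = 1 - z := by
      rw [eq_comm, eq_div_iff hx₀pos.ne']
      field_simp
    rw [hq, binEnt, show (1 : ℝ) - (1 - z) = z by ring,
      Real.logb_div hz0.ne' h1z.ne', ← hz]
    field_simp
    ring
end

section
/- Let n ≥ d ≥ 1 and 0 < ω < 1 with d < ωn < n. Then the equation ωn + Σ_{i=d}^{n} binom(n,i)(ωn - i)x^i = 0 has a unique positive real root x₀. -/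
noncomputable def aCoef (n : ℕ) (ω : ℝ) (i : ℕ) : ℝ := (n.choose i : ℝ) * (ω * n - i)

noncomputable def auxF (n d : ℕ) (ω : ℝ) (x : ℝ) : ℝ :=
  ω * n + ∑ i ∈ Finset.Icc d n, aCoef n ω i * x ^ i

lemma pow_cross {x y : ℝ} (hx : 0 ≤ x) (hxy : x ≤ y) {i m : ℕ} (him : i ≤ m) :
    y ^ i * x ^ m ≤ x ^ i * y ^ m := by
  have hy : 0 ≤ y := hx.trans hxy
  have h1 : x ^ m = x ^ i * x ^ (m - i) := by rw [← pow_add]; congr 1; omega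
  have h2 : y ^ m = y ^ i * y ^ (m - i) := by rw [← pow_add]; congr 1; omega
  have h3 : x ^ (m - i) ≤ y ^ (m - i) := pow_le_pow_left₀ hx hxy _
  calc y ^ i * x ^ m = x ^ i * (y ^ i * x ^ (m - i)) := by rw [h1]; ring
    _ ≤ x ^ i * (y ^ i * y ^ (m - i)) := by
        refine mul_le_mul_of_nonneg_left ?_ (pow_nonneg hx i)
        exact mul_le_mul_of_nonneg_left h3 (pow_nonneg hy i)
    _ = x ^ i * y ^ m := by rw [h2]

lemma key_lt (n d : ℕ) (ω : ℝ) (hωn : 0 < ω * n) (hdm : d ≤ ⌊ω * n⌋₊) (hm1 : 1 ≤ ⌊ω * n⌋₊)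
    {x y : ℝ} (hx : 0 < x) (hxy : x < y) :
    auxF n d ω y * x ^ ⌊ω * n⌋₊ < auxF n d ω x * y ^ ⌊ω * n⌋₊ := by
  set m := ⌊ω * n⌋₊ with hm
  have hy : 0 < y := hx.trans hxy
  have hmle : (m : ℝ) ≤ ω * n := Nat.floor_le hωn.le
  have hmgt : ω * n < m + 1 := Nat.lt_floor_add_one _
  have hterm : ∀ i ∈ Finset.Icc d n,
      aCoef n ω i * y ^ i * x ^ m ≤ aCoef n ω i * x ^ i * y ^ m := by
    intro i _
    rcases le_or_gt i m with him | him
    · have hai : 0 ≤ aCoef n ω i := by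
        have hi : (i : ℝ) ≤ m := Nat.cast_le.mpr him
        exact mul_nonneg (Nat.cast_nonneg _) (by linarith)
      have h := pow_cross hx.le hxy.le him
      rw [mul_assoc, mul_assoc]
      exact mul_le_mul_of_nonneg_left h hai
    · have hai : aCoef n ω i ≤ 0 := by
        have hi : (m : ℝ) + 1 ≤ i := by exact_mod_cast Nat.succ_le_of_lt him
        exact mul_nonpos_of_nonneg_of_nonpos (Nat.cast_nonneg _) (by linarith)
      have h : x ^ i * y ^ m ≤ y ^ i * x ^ m := by
        calc x ^ i * y ^ m = y ^ m * x ^ i := mul_comm _ _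
          _ ≤ x ^ m * y ^ i := pow_cross hx.le hxy.le him.le
          _ = y ^ i * x ^ m := mul_comm _ _
      rw [mul_assoc, mul_assoc]
      exact mul_le_mul_of_nonpos_left h hai
  have hsum := Finset.sum_le_sum hterm
  have hconst : ω * n * x ^ m < ω * n * y ^ m := by
    refine mul_lt_mul_of_pos_left ?_ hωn
    exact pow_lt_pow_left₀ hxy hx.le (by omega)
  calc auxF n d ω y * x ^ m
      = ω * n * x ^ m + ∑ i ∈ Finset.Icc d n, aCoef n ω i * y ^ i * x ^ m := by
        rw [auxF, add_mul, Finset.sum_mul]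
    _ < ω * n * y ^ m + ∑ i ∈ Finset.Icc d n, aCoef n ω i * x ^ i * y ^ m :=
        add_lt_add_of_lt_of_le hconst hsum
    _ = auxF n d ω x * y ^ m := by rw [auxF, add_mul, Finset.sum_mul]

theorem stmt_6 (n d : ℕ) (hd : 1 ≤ d) (hdn : d ≤ n) (ω : ℝ) (hω0 : 0 < ω) (hω1 : ω < 1)
    (hlow : (d : ℝ) < ω * n) (hhigh : ω * n < n) :
    ∃! x : ℝ, 0 < x ∧
      ω * n + ∑ i ∈ Finset.Icc d n, (n.choose i : ℝ) * (ω * n - i) * x ^ i = 0 := by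
  obtain ⟨k, rfl⟩ : ∃ k, n = k + 1 := ⟨n - 1, by omega⟩
  show ∃! x : ℝ, 0 < x ∧ auxF (k + 1) d ω x = 0
  have hωn : 0 < ω * ((k : ℝ) + 1) := by
    have : (0 : ℝ) ≤ d := Nat.cast_nonneg d
    push_cast at hlow ⊢
    linarith
  have hωn' : 0 < ω * ((k + 1 : ℕ) : ℝ) := by push_cast; exact hωn
  set m := ⌊ω * ((k + 1 : ℕ) : ℝ)⌋₊ with hmdef
  have hdm : d ≤ m := Nat.le_floor hlow.le
  have hm1 : 1 ≤ m := hd.trans hdm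
  -- f 0 = ω n
  have hf0 : auxF (k + 1) d ω 0 = ω * ((k + 1 : ℕ) : ℝ) := by
    rw [auxF, Finset.sum_eq_zero, add_zero]
    intro i hi
    have h1 := (Finset.mem_Icc.mp hi).1
    rw [zero_pow (by omega), mul_zero]
  -- continuity
  have hcont : Continuous (auxF (k + 1) d ω) := by
    have : auxF (k + 1) d ω = fun x =>
        ω * ((k + 1 : ℕ) : ℝ) + ∑ i ∈ Finset.Icc d (k + 1), aCoef (k + 1) ω i * x ^ i := rfl
    rw [this]
    exact continuous_const.add (continuous_finset_sum _ fun i _ =>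
      continuous_const.mul (continuous_pow i))
  -- find a point where f is negative
  have hdk1 : d < k + 1 := by
    have : (d : ℝ) < ((k + 1 : ℕ) : ℝ) := hlow.trans hhigh
    exact_mod_cast this
  set S : ℝ := ∑ i ∈ Finset.Icc d (k + 1), |aCoef (k + 1) ω i| with hSdef
  have hS : 0 ≤ S := Finset.sum_nonneg fun i _ => abs_nonneg _
  set C : ℝ := ω * ((k + 1 : ℕ) : ℝ) with hCdef
  have hC : 0 < C := hωn'
  set B : ℝ := ((k + 1 : ℕ) : ℝ) - C with hBdef
  have hB : 0 < B := by rw [hBdef, hCdef]; linarith [hhigh]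
  set X : ℝ := max 1 ((C + S + 1) / B) with hXdef
  have hX1 : (1 : ℝ) ≤ X := le_max_left _ _
  have hXpos : 0 < X := lt_of_lt_of_le one_pos hX1
  have hBX : C + S + 1 ≤ B * X := by
    have h := (div_le_iff₀ hB).mp (le_max_right 1 ((C + S + 1) / B))
    rw [mul_comm] at h
    exact h
  have hfX : auxF (k + 1) d ω X < 0 := by
    have hsplit : ∑ i ∈ Finset.Icc d (k + 1), aCoef (k + 1) ω i * X ^ i
        = (∑ i ∈ Finset.Icc d k, aCoef (k + 1) ω i * X ^ i)
          + aCoef (k + 1) ω (k + 1) * X ^ (k + 1) :=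
      Finset.sum_Icc_succ_top (by omega) _
    have htop : aCoef (k + 1) ω (k + 1) = C - ((k + 1 : ℕ) : ℝ) := by
      rw [aCoef, Nat.choose_self, hCdef]; push_cast; ring
    have hmid : (∑ i ∈ Finset.Icc d k, aCoef (k + 1) ω i * X ^ i) ≤ S * X ^ k := by
      calc (∑ i ∈ Finset.Icc d k, aCoef (k + 1) ω i * X ^ i)
          ≤ ∑ i ∈ Finset.Icc d k, |aCoef (k + 1) ω i| * X ^ k := by
            refine Finset.sum_le_sum fun i hi => ?_
            have hik := (Finset.mem_Icc.mp hi).2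
            calc aCoef (k + 1) ω i * X ^ i ≤ |aCoef (k + 1) ω i| * X ^ i :=
                  mul_le_mul_of_nonneg_right (le_abs_self _) (pow_nonneg hXpos.le i)
              _ ≤ |aCoef (k + 1) ω i| * X ^ k :=
                  mul_le_mul_of_nonneg_left (pow_le_pow_right₀ hX1 hik) (abs_nonneg _)
        _ ≤ ∑ i ∈ Finset.Icc d (k + 1), |aCoef (k + 1) ω i| * X ^ k := by
            refine Finset.sum_le_sum_of_subset_of_nonneg
              (Finset.Icc_subset_Icc_right (by omega)) fun i _ _ => ?_
            exact mul_nonneg (abs_nonneg _) (pow_nonneg hXpos.le k)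
        _ = S * X ^ k := by rw [hSdef, Finset.sum_mul]
    have hP1 : (1 : ℝ) ≤ X ^ k := by
      calc (1 : ℝ) = 1 ^ k := (one_pow k).symm
        _ ≤ X ^ k := pow_le_pow_left₀ zero_le_one hX1 k
    have hPnn : (0 : ℝ) ≤ X ^ k := by positivity
    have e : (C - ((k + 1 : ℕ) : ℝ)) * X ^ (k + 1) = X ^ k * (-(B * X)) := by
      rw [pow_succ, hBdef]; ring
    have h1 : S - B * X ≤ -C - 1 := by linarith
    have h2 : X ^ k * (S - B * X) ≤ X ^ k * (-C - 1) :=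
      mul_le_mul_of_nonneg_left h1 hPnn
    have h3 : X ^ k * (-C - 1) ≤ 1 * (-C - 1) :=
      mul_le_mul_of_nonpos_right hP1 (by linarith)
    have hfXle : auxF (k + 1) d ω X ≤ C + S * X ^ k + (C - ((k + 1 : ℕ) : ℝ)) * X ^ (k + 1) := by
      rw [auxF, hsplit, htop, ← hCdef]
      linarith
    have hSXk : S * X ^ k = X ^ k * S := mul_comm _ _
    nlinarith [h2, h3, hfXle, e]
  -- existence via IVT
  obtain ⟨x₀, hx₀mem, hfx₀⟩ :=
    intermediate_value_Icc' hXpos.le hcont.continuousOn ⟨hfX.le, by rw [hf0]; exact hωn'.le⟩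
  have hx₀pos : 0 < x₀ := by
    rcases eq_or_lt_of_le hx₀mem.1 with h | h
    · exfalso; rw [← h] at hfx₀; rw [hf0] at hfx₀; linarith
    · exact h
  refine ⟨x₀, ⟨hx₀pos, hfx₀⟩, ?_⟩
  rintro y ⟨hy, hfy⟩
  show y = x₀
  have hfy' : auxF (k + 1) d ω y = 0 := hfy
  rcases lt_trichotomy y x₀ with hlt | heq | hgt
  · exfalso
    have := key_lt (k + 1) d ω hωn' hdm hm1 hy hlt
    rw [hfy', hfx₀, zero_mul, zero_mul] at this
    exact lt_irrefl 0 this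
  · exact heq
  · exfalso
    have := key_lt (k + 1) d ω hωn' hdm hm1 hx₀pos hgt
    rw [hfy', hfx₀, zero_mul, zero_mul] at this
    exact lt_irrefl 0 this
end

section
/- Let t ≥ 2 and let φ(β₁,…,β_t) = (Π_i β_i)·h(ω / Π_i β_i) - (1-R₁)·Σ_i β_i be defined on the domain D = {β ∈ (0,1]^t : Π_i β_i > ω}, where 0 < ω < 1 and 0 ≤ R₁ < 1 and h is the binary entropy (base 2). Then φ is strictly concave on D. -/
open Real Finset

noncomputable def psiAux (ω u : ℝ) : ℝ :=
  (Real.exp u * u - (Real.exp u - ω) * Real.log (Real.exp u - ω)) / Real.log 2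

lemma key_identity {ω : ℝ} (hω : 0 < ω) {z : ℝ} (hz : ω < z) :
    z * binEnt (ω / z) = psiAux ω (Real.log z) - ω * Real.logb 2 ω := by
  have hz0 : 0 < z := hω.trans hz
  have h1 : Real.exp (Real.log z) = z := Real.exp_log hz0
  have hzω : 0 < z - ω := by linarith
  have hl2 : Real.log 2 ≠ 0 := ne_of_gt (Real.log_pos one_lt_two)
  unfold binEnt psiAux Real.logb
  rw [h1]
  have hlog : Real.log (ω / z) = Real.log ω - Real.log z :=
    Real.log_div (ne_of_gt hω) (ne_of_gt hz0)
  have h2 : (1 : ℝ) - ω / z = (z - ω) / z := by field_simp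
  have hlog2 : Real.log ((z - ω) / z) = Real.log (z - ω) - Real.log z :=
    Real.log_div (ne_of_gt hzω) (ne_of_gt hz0)
  rw [hlog, h2, hlog2]
  field_simp
  ring

lemma psi_hasDerivAt {ω : ℝ} (hω : 0 < ω) {u : ℝ} (hu : Real.log ω < u) :
    HasDerivAt (psiAux ω) (Real.exp u * (u - Real.log (Real.exp u - ω)) / Real.log 2) u := by
  have hQ : ω < Real.exp u := by
    calc ω = Real.exp (Real.log ω) := (Real.exp_log hω).symm
    _ < Real.exp u := Real.exp_lt_exp.mpr hu
  have hQω : 0 < Real.exp u - ω := by linarith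
  have h1 : HasDerivAt (fun u => Real.exp u * u) (Real.exp u * u + Real.exp u) u := by
    exact ((Real.hasDerivAt_exp u).mul (hasDerivAt_id u)).congr_deriv (by simp)
  have hg : HasDerivAt (fun u => Real.exp u - ω) (Real.exp u) u :=
    (Real.hasDerivAt_exp u).sub_const ω
  have hlog : HasDerivAt (fun u => Real.log (Real.exp u - ω))
      ((Real.exp u - ω)⁻¹ * Real.exp u) u :=
    by have := (Real.hasDerivAt_log (ne_of_gt hQω)).comp u hg; exact this
  have h2 : HasDerivAt (fun u => (Real.exp u - ω) * Real.log (Real.exp u - ω))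
      (Real.exp u * Real.log (Real.exp u - ω) +
        (Real.exp u - ω) * ((Real.exp u - ω)⁻¹ * Real.exp u)) u := hg.mul hlog
  have h3 := (h1.sub h2).div_const (Real.log 2)
  refine h3.congr_deriv ?_
  field_simp
  ring

noncomputable def psiD (ω u : ℝ) : ℝ := Real.exp u * (u - Real.log (Real.exp u - ω)) / Real.log 2

lemma psiD_hasDerivAt {ω : ℝ} (hω : 0 < ω) {u : ℝ} (hu : Real.log ω < u) :
    HasDerivAt (psiD ω)
      (Real.exp u * (u - Real.log (Real.exp u - ω) - ω / (Real.exp u - ω)) / Real.log 2) u := by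
  have hQ : ω < Real.exp u := by
    calc ω = Real.exp (Real.log ω) := (Real.exp_log hω).symm
    _ < Real.exp u := Real.exp_lt_exp.mpr hu
  have hQω : 0 < Real.exp u - ω := by linarith
  have hg : HasDerivAt (fun u => Real.exp u - ω) (Real.exp u) u :=
    (Real.hasDerivAt_exp u).sub_const ω
  have hlog : HasDerivAt (fun u => Real.log (Real.exp u - ω))
      ((Real.exp u - ω)⁻¹ * Real.exp u) u :=
    by have := (Real.hasDerivAt_log (ne_of_gt hQω)).comp u hg; exact this
  have hin : HasDerivAt (fun u => u - Real.log (Real.exp u - ω))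
      (1 - (Real.exp u - ω)⁻¹ * Real.exp u) u := (hasDerivAt_id u).sub hlog
  have h2 : HasDerivAt (fun u => Real.exp u * (u - Real.log (Real.exp u - ω)))
      (Real.exp u * (u - Real.log (Real.exp u - ω)) +
        Real.exp u * (1 - (Real.exp u - ω)⁻¹ * Real.exp u)) u := by
    exact (Real.hasDerivAt_exp u).mul hin
  have h3 := h2.div_const (Real.log 2)
  refine h3.congr_deriv ?_
  field_simp
  ring

lemma psi_strictConcaveOn {ω : ℝ} (hω : 0 < ω) :
    StrictConcaveOn ℝ (Set.Ioi (Real.log ω)) (psiAux ω) := by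
  have hl2 : 0 < Real.log 2 := Real.log_pos one_lt_two
  have hderiv : ∀ u ∈ Set.Ioi (Real.log ω), deriv (psiAux ω) u = psiD ω u := by
    intro u hu
    exact (psi_hasDerivAt hω hu).deriv
  apply strictConcaveOn_of_deriv2_neg (convex_Ioi _)
  · intro u hu
    exact (psi_hasDerivAt hω hu).differentiableAt.continuousAt.continuousWithinAt
  · intro u hu
    rw [interior_Ioi] at hu
    have hQ : ω < Real.exp u := by
      calc ω = Real.exp (Real.log ω) := (Real.exp_log hω).symm
      _ < Real.exp u := Real.exp_lt_exp.mpr hu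
    have hQω : 0 < Real.exp u - ω := by linarith
    have heq : deriv (psiAux ω) =ᶠ[nhds u] psiD ω := by
      filter_upwards [Ioi_mem_nhds hu] with v hv using hderiv v hv
    have : deriv (deriv (psiAux ω)) u = deriv (psiD ω) u := heq.deriv_eq
    have hD := (psiD_hasDerivAt hω hu).deriv
    show deriv (deriv (psiAux ω)) u < 0
    rw [this, hD]
    apply div_neg_of_neg_of_pos _ hl2
    apply mul_neg_of_pos_of_neg (Real.exp_pos u)
    -- u - log(Q-ω) - ω/(Q-ω) < 0, where u = log Q
    have hu' : u = Real.log (Real.exp u) := (Real.log_exp u).symm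
    set Q := Real.exp u with hQdef
    have hr : Q / (Q - ω) > 1 := by
      rw [gt_iff_lt, lt_div_iff₀ hQω]; linarith
    have hlt : Real.log (Q / (Q - ω)) < Q / (Q - ω) - 1 :=
      Real.log_lt_sub_one_of_pos (by linarith) (ne_of_gt hr)
    have hsplit : Real.log (Q / (Q - ω)) = Real.log Q - Real.log (Q - ω) :=
      Real.log_div (by positivity) (ne_of_gt hQω)
    have h2 : Q / (Q - ω) - 1 = ω / (Q - ω) := by field_simp; ring
    rw [hu']
    rw [hsplit, h2] at hlt
    linarith

lemma psi_strictMonoOn {ω : ℝ} (hω : 0 < ω) :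
    StrictMonoOn (psiAux ω) (Set.Ioi (Real.log ω)) := by
  have hl2 : 0 < Real.log 2 := Real.log_pos one_lt_two
  apply strictMonoOn_of_deriv_pos (convex_Ioi _)
  · intro u hu
    exact (psi_hasDerivAt hω hu).differentiableAt.continuousAt.continuousWithinAt
  · intro u hu
    rw [interior_Ioi] at hu
    have hQ : ω < Real.exp u := by
      calc ω = Real.exp (Real.log ω) := (Real.exp_log hω).symm
      _ < Real.exp u := Real.exp_lt_exp.mpr hu
    have hQω : 0 < Real.exp u - ω := by linarith
    rw [(psi_hasDerivAt hω hu).deriv]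
    apply div_pos _ hl2
    apply mul_pos (Real.exp_pos u)
    have : Real.log (Real.exp u - ω) < Real.log (Real.exp u) :=
      Real.log_lt_log hQω (by linarith)
    rw [Real.log_exp] at this
    linarith

lemma sum_log_le {t : ℕ} {x y : Fin t → ℝ} (hx : ∀ i, 0 < x i) (hy : ∀ i, 0 < y i)
    {a b : ℝ} (ha : 0 < a) (hb : 0 < b) (hab : a + b = 1) :
    a * ∑ i, Real.log (x i) + b * ∑ i, Real.log (y i) ≤
      ∑ i, Real.log (a * x i + b * y i) := by
  rw [Finset.mul_sum, Finset.mul_sum, ← Finset.sum_add_distrib]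
  apply Finset.sum_le_sum
  intro i _
  have := strictConcaveOn_log_Ioi.concaveOn.2 (Set.mem_Ioi.mpr (hx i))
    (Set.mem_Ioi.mpr (hy i)) ha.le hb.le hab
  simpa [smul_eq_mul] using this

lemma sum_log_lt {t : ℕ} {x y : Fin t → ℝ} (hx : ∀ i, 0 < x i) (hy : ∀ i, 0 < y i)
    (hxy : x ≠ y) {a b : ℝ} (ha : 0 < a) (hb : 0 < b) (hab : a + b = 1) :
    a * ∑ i, Real.log (x i) + b * ∑ i, Real.log (y i) <
      ∑ i, Real.log (a * x i + b * y i) := by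
  rw [Finset.mul_sum, Finset.mul_sum, ← Finset.sum_add_distrib]
  obtain ⟨i₀, hi₀⟩ := Function.ne_iff.mp hxy
  apply Finset.sum_lt_sum
  · intro i _
    have := strictConcaveOn_log_Ioi.concaveOn.2 (Set.mem_Ioi.mpr (hx i))
      (Set.mem_Ioi.mpr (hy i)) ha.le hb.le hab
    simpa [smul_eq_mul] using this
  · refine ⟨i₀, Finset.mem_univ _, ?_⟩
    have := strictConcaveOn_log_Ioi.2 (Set.mem_Ioi.mpr (hx i₀))
      (Set.mem_Ioi.mpr (hy i₀)) hi₀ ha hb hab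
    simpa [smul_eq_mul] using this

theorem stmt_11 (t : ℕ) (ht : 2 ≤ t) (ω R₁ : ℝ)
    (hω0 : 0 < ω) (hω1 : ω < 1) (hR0 : 0 ≤ R₁) (hR1 : R₁ < 1) :
    StrictConcaveOn ℝ
      {β : Fin t → ℝ | (∀ i, 0 < β i ∧ β i ≤ 1) ∧ ω < ∏ i, β i}
      (fun β => (∏ i, β i) * binEnt (ω / ∏ i, β i) - (1 - R₁) * ∑ i, β i) := by
  constructor
  · -- Convexity of the domain
    intro x hx y hy a b ha hb hab
    rcases ha.eq_or_lt with rfl | ha'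
    · simpa [show b = 1 by linarith] using hy
    rcases hb.eq_or_lt with rfl | hb'
    · simpa [show a = 1 by linarith] using hx
    have hmempos : ∀ i, 0 < a * x i + b * y i := fun i =>
      add_pos (mul_pos ha' (hx.1 i).1) (mul_pos hb' (hy.1 i).1)
    refine ⟨fun i => ⟨by simpa using hmempos i, ?_⟩, ?_⟩
    · have h1 := (hx.1 i).2; have h2 := (hy.1 i).2
      have hmi : (a • x + b • y) i = a * x i + b * y i := by simp [smul_eq_mul]
      rw [hmi]; nlinarith [(hx.1 i).1, (hy.1 i).1]
    · -- product condition
      have hpx : (0:ℝ) < ∏ i, x i := Finset.prod_pos fun i _ => (hx.1 i).1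
      have hpy : (0:ℝ) < ∏ i, y i := Finset.prod_pos fun i _ => (hy.1 i).1
      have hux : Real.log ω < Real.log (∏ i, x i) := Real.log_lt_log hω0 hx.2
      have huy : Real.log ω < Real.log (∏ i, y i) := Real.log_lt_log hω0 hy.2
      have hlx : Real.log (∏ i, x i) = ∑ i, Real.log (x i) :=
        Real.log_prod fun i _ => ne_of_gt (hx.1 i).1
      have hly : Real.log (∏ i, y i) = ∑ i, Real.log (y i) :=
        Real.log_prod fun i _ => ne_of_gt (hy.1 i).1
      have hsum := sum_log_le (fun i => (hx.1 i).1) (fun i => (hy.1 i).1) ha' hb' hab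
      have hlm : Real.log (∏ i, (a • x + b • y) i) = ∑ i, Real.log (a * x i + b * y i) := by
        simp only [Pi.add_apply, Pi.smul_apply, smul_eq_mul]
        exact Real.log_prod fun i _ => ne_of_gt (hmempos i)
    
      have hgt : Real.log ω < Real.log (∏ i, (a • x + b • y) i) := by
        rw [hlm]
        have : Real.log ω = a * Real.log ω + b * Real.log ω := by rw [← add_mul, hab, one_mul]
        rw [hlx] at hux; rw [hly] at huy
        nlinarith
      have hpm : (0:ℝ) < ∏ i, (a • x + b • y) i := by
        apply Finset.prod_pos
        intro i _
        simpa [smul_eq_mul] using hmempos i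
      calc ω = Real.exp (Real.log ω) := (Real.exp_log hω0).symm
      _ < Real.exp (Real.log (∏ i, (a • x + b • y) i)) := Real.exp_lt_exp.mpr hgt
      _ = _ := Real.exp_log hpm
  · -- strict inequality
    intro x hx y hy hxy a b ha hb hab
    have hmempos : ∀ i, 0 < a * x i + b * y i := fun i =>
      add_pos (mul_pos ha (hx.1 i).1) (mul_pos hb (hy.1 i).1)
    have hpx : (0:ℝ) < ∏ i, x i := Finset.prod_pos fun i _ => (hx.1 i).1
    have hpy : (0:ℝ) < ∏ i, y i := Finset.prod_pos fun i _ => (hy.1 i).1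
    have hlx : Real.log (∏ i, x i) = ∑ i, Real.log (x i) :=
      Real.log_prod fun i _ => ne_of_gt (hx.1 i).1
    have hly : Real.log (∏ i, y i) = ∑ i, Real.log (y i) :=
      Real.log_prod fun i _ => ne_of_gt (hy.1 i).1
    have hux : Real.log ω < Real.log (∏ i, x i) := Real.log_lt_log hω0 hx.2
    have huy : Real.log ω < Real.log (∏ i, y i) := Real.log_lt_log hω0 hy.2
    have hsum := sum_log_lt (fun i => (hx.1 i).1) (fun i => (hy.1 i).1) hxy ha hb hab
    -- product over midpoint
    have hmid_apply : ∀ i, (a • x + b • y) i = a * x i + b * y i := by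
      intro i; simp [smul_eq_mul]
    have hpm : (0:ℝ) < ∏ i, (a • x + b • y) i := by
      apply Finset.prod_pos; intro i _; rw [hmid_apply i]; exact hmempos i
    have hlm : Real.log (∏ i, (a • x + b • y) i) = ∑ i, Real.log (a * x i + b * y i) := by
      simp only [hmid_apply]
      exact Real.log_prod fun i _ => ne_of_gt (hmempos i)
    have hcombo : Real.log ω < a * Real.log (∏ i, x i) + b * Real.log (∏ i, y i) := by
      have : Real.log ω = a * Real.log ω + b * Real.log ω := by rw [← add_mul, hab, one_mul]
      nlinarith
    have hum : a * Real.log (∏ i, x i) + b * Real.log (∏ i, y i)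
        < Real.log (∏ i, (a • x + b • y) i) := by
      rw [hlx, hly, hlm]; exact hsum
    have hpmω : ω < ∏ i, (a • x + b • y) i := by
      calc ω = Real.exp (Real.log ω) := (Real.exp_log hω0).symm
      _ < Real.exp (Real.log (∏ i, (a • x + b • y) i)) :=
          Real.exp_lt_exp.mpr (hcombo.trans hum)
      _ = _ := Real.exp_log hpm
    -- psi inequalities
    have hmemx : Real.log (∏ i, x i) ∈ Set.Ioi (Real.log ω) := hux
    have hmemy : Real.log (∏ i, y i) ∈ Set.Ioi (Real.log ω) := huy
    have hconc := (psi_strictConcaveOn hω0).concaveOn.2 hmemx hmemy ha.le hb.le hab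
    have hmono := (psi_strictMonoOn hω0) (Set.mem_Ioi.mpr hcombo)
      (Set.mem_Ioi.mpr (hcombo.trans hum)) hum
    have hpsi : a * psiAux ω (Real.log (∏ i, x i)) + b * psiAux ω (Real.log (∏ i, y i))
        < psiAux ω (Real.log (∏ i, (a • x + b • y) i)) := by
      have := hconc
      simp only [smul_eq_mul] at this
      linarith
    -- rewrite φ using the key identity
    have hkx := key_identity hω0 hx.2
    have hky := key_identity hω0 hy.2
    have hkm := key_identity hω0 hpmω
    have hsummid : ∑ i, (a • x + b • y) i = a * ∑ i, x i + b * ∑ i, y i := by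
      simp only [hmid_apply]
      rw [Finset.sum_add_distrib, Finset.mul_sum, Finset.mul_sum]
    simp only [smul_eq_mul]
    rw [hkx, hky, hkm, hsummid]
    have hrw : a * (psiAux ω (Real.log (∏ i, x i)) - ω * Real.logb 2 ω - (1 - R₁) * ∑ i, x i) +
        b * (psiAux ω (Real.log (∏ i, y i)) - ω * Real.logb 2 ω - (1 - R₁) * ∑ i, y i) =
        (a * psiAux ω (Real.log (∏ i, x i)) + b * psiAux ω (Real.log (∏ i, y i)))
          - ω * Real.logb 2 ω - (1 - R₁) * (a * ∑ i, x i + b * ∑ i, y i) := by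
      linear_combination (-(ω * Real.logb 2 ω)) * hab
    rw [hrw]
    linarith [hpsi]
end

section
/- Suppose the i-th threshold-decoding subprocedure with threshold θ = d₁/κ (κ ≥ 2) introduces more errors than it removes. Then with μ_i = |E(N_i)| / (|E(N_i)| + |E(B_i)|), the number of removed errors satisfies |E(G_i)| ≤ ((1-μ_i)/(κ-μ_i))·|E|; in particular |E(G_i)| ≤ |E|/κ. -/
theorem stmt_15 (κ d₁ eg en eb b : ℝ) (hκ : 2 ≤ κ) (hd : 0 < d₁)
    (hb : 0 ≤ b) (heg : 0 ≤ eg) (hen : 0 ≤ en) (heb : 0 ≤ eb)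
    (hpos : 0 < en + eb)
    -- the subprocedure introduces at least `eg` errors (more than it removes),
    -- and introduces at most `d₁/κ` errors at each of the `b` badly decoded vertices:
    (hintro : eg ≤ b * (d₁ / κ))
    -- each badly decoded vertex has `E`-degree at least `(κ-1)d₁/κ`:
    (hB : b * ((κ - 1) * d₁ / κ) ≤ eb) :
    eg ≤ ((1 - en / (en + eb)) / (κ - en / (en + eb))) * (eg + en + eb) ∧
      eg ≤ (eg + en + eb) / κ := by
  have hκ0 : 0 < κ := by linarith
  have hκ1 : (1:ℝ) ≤ κ - 1 := by linarith
  -- key inequality: (κ-1) * eg ≤ eb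
  have key : (κ - 1) * eg ≤ eb := by
    have h1 : (κ - 1) * eg ≤ (κ - 1) * (b * (d₁ / κ)) := by
      apply mul_le_mul_of_nonneg_left hintro; linarith
    have h2 : (κ - 1) * (b * (d₁ / κ)) = b * ((κ - 1) * d₁ / κ) := by ring
    linarith [h2 ▸ h1]
  have hμ : en / (en + eb) ≤ 1 := by
    rw [div_le_one hpos]; linarith
  have hμ0 : 0 ≤ en / (en + eb) := div_nonneg hen (le_of_lt hpos)
  have hκμ : 0 < κ - en / (en + eb) := by linarith
  have hcancel : en / (en + eb) * (en + eb) = en := div_mul_cancel₀ en (ne_of_gt hpos)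
  constructor
  · rw [div_mul_eq_mul_div, le_div_iff₀ hκμ]
    nlinarith [mul_nonneg heg hμ0, mul_le_mul_of_nonneg_left hμ heg]
  · rw [le_div_iff₀ hκ0]
    nlinarith
end
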